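/- Let P be a finite graded poset. Then I ∘ Gyr_A = Gyr_J ∘ I, where I : A(P) → J(P) is the bijection sending an antichain to the order ideal it generates. That is, for every antichain A ∈ A(P), the order ideal generated by Gyr_A(A) equals Gyr_J(I(A)). -/

import Mathlib

open scoped Classical

variable {P : Type*} [PartialOrder P]

abbrev OrderIdealSub (P : Type*) [PartialOrder P] : Type _ := {I : Set P // IsLowerSet I}

abbrev AntichainSub (P : Type*) [PartialOrder P] : Type _ := {A : Set P // IsAntichain (· ≤ ·) A}

noncomputable def togFun (e : P) (I : OrderIdealSub P) : OrderIdealSub P :=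
  if _h : e ∈ I.1 then
    if h2 : IsLowerSet (I.1 \ {e}) then ⟨I.1 \ {e}, h2⟩ else I
  else
    if h2 : IsLowerSet (insert e I.1) then ⟨insert e I.1, h2⟩ else I

noncomputable def atogFun (e : P) (A : AntichainSub P) : AntichainSub P :=
  if _h : e ∈ A.1 then ⟨A.1 \ {e}, A.2.subset Set.diff_subset⟩
  else if h2 : IsAntichain (· ≤ ·) (insert e A.1) then ⟨insert e A.1, h2⟩
  else A

def idealOf (A : AntichainSub P) : OrderIdealSub P :=
  ⟨{x | ∃ y ∈ A.1, x ≤ y}, fun _a _b hba ha => by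
    obtain ⟨y, hy, h⟩ := ha
    exact ⟨y, hy, hba.trans h⟩⟩

def listComp {α : Type*} (fs : List (α → α)) : α → α := fs.foldr (· ∘ ·) id

theorem togFun_involutive (e : P) : Function.Involutive (togFun (P := P) e) := by
  intro I
  unfold togFun
  by_cases h : e ∈ I.1
  · rw [dif_pos h]
    by_cases h2 : IsLowerSet (I.1 \ {e})
    · rw [dif_pos h2]
      have hne : e ∉ (⟨I.1 \ {e}, h2⟩ : OrderIdealSub P).1 := fun hc => hc.2 rfl
      rw [dif_neg hne]
      have hins : insert e (I.1 \ {e}) = I.1 := by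
        rw [Set.insert_diff_singleton, Set.insert_eq_self.mpr h]
      have h3 : IsLowerSet (insert e ((⟨I.1 \ {e}, h2⟩ : OrderIdealSub P)).1) := by
        show IsLowerSet (insert e (I.1 \ {e})); rw [hins]; exact I.2
      rw [dif_pos h3]
      exact Subtype.ext hins
    · rw [dif_neg h2, dif_pos h, dif_neg h2]
  · rw [dif_neg h]
    by_cases h2 : IsLowerSet (insert e I.1)
    · rw [dif_pos h2]
      have hme : e ∈ (⟨insert e I.1, h2⟩ : OrderIdealSub P).1 := Set.mem_insert e I.1
      rw [dif_pos hme]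
      have hdel : (insert e I.1) \ {e} = I.1 := by
        rw [Set.insert_diff_self_of_notMem h]
      have h3 : IsLowerSet ((⟨insert e I.1, h2⟩ : OrderIdealSub P).1 \ {e}) := by
        show IsLowerSet ((insert e I.1) \ {e}); rw [hdel]; exact I.2
      rw [dif_pos h3]
      exact Subtype.ext hdel
    · rw [dif_neg h2, dif_neg h, dif_neg h2]

theorem atogFun_involutive (e : P) : Function.Involutive (atogFun (P := P) e) := by
  intro A
  unfold atogFun
  by_cases h : e ∈ A.1
  · rw [dif_pos h]
    have hne : e ∉ (⟨A.1 \ {e}, A.2.subset Set.diff_subset⟩ : AntichainSub P).1 :=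
      fun hc => hc.2 rfl
    rw [dif_neg hne]
    have hins : insert e (A.1 \ {e}) = A.1 := by
      rw [Set.insert_diff_singleton, Set.insert_eq_self.mpr h]
    have h2 : IsAntichain (· ≤ ·)
        (insert e ((⟨A.1 \ {e}, A.2.subset Set.diff_subset⟩ : AntichainSub P)).1) := by
      show IsAntichain (· ≤ ·) (insert e (A.1 \ {e})); rw [hins]; exact A.2
    rw [dif_pos h2]
    exact Subtype.ext hins
  · rw [dif_neg h]
    by_cases h2 : IsAntichain (· ≤ ·) (insert e A.1)
    · rw [dif_pos h2]
      have hme : e ∈ (⟨insert e A.1, h2⟩ : AntichainSub P).1 := Set.mem_insert e A.1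
      rw [dif_pos hme]
      have hdel : (insert e A.1) \ {e} = A.1 := by
        rw [Set.insert_diff_self_of_notMem h]
      exact Subtype.ext hdel
    · rw [dif_neg h2, dif_neg h, dif_neg h2]

noncomputable def togPerm (e : P) : Equiv.Perm (OrderIdealSub P) :=
  (togFun_involutive e).toPerm _

noncomputable def atogPerm (e : P) : Equiv.Perm (AntichainSub P) :=
  (atogFun_involutive e).toPerm _

def IsLinExtListOn (S : Set P) (l : List P) : Prop :=
  l.Nodup ∧ (∀ x : P, x ∈ l ↔ x ∈ S) ∧
    ∀ i j : Fin l.length, l.get i < l.get j → (i : ℕ) < (j : ℕ)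

noncomputable def RowJ (I : OrderIdealSub P) : OrderIdealSub P :=
  ⟨{x | ∃ m, (m ∉ I.1 ∧ ∀ z, z ∉ I.1 → z ≤ m → z = m) ∧ x ≤ m}, fun _a _b hba ha => by
    obtain ⟨m, hm, h⟩ := ha
    exact ⟨m, hm, hba.trans h⟩⟩

noncomputable def RowA (A : AntichainSub P) : AntichainSub P :=
  ⟨{x | x ∉ (idealOf A).1 ∧ ∀ z, z ∉ (idealOf A).1 → z ≤ x → z = x}, by
    intro a ha b hb hne hab
    exact hne (hb.2 a ha.1 hab)⟩


section GyrAux2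
set_option linter.unusedSectionVars false

variable {P : Type*} [PartialOrder P]

theorem listComp_cons' {α : Type*} (f : α → α) (fs : List (α → α)) :
    listComp (f :: fs) = f ∘ listComp fs := rfl

theorem listComp_append' {α : Type*} (fs gs : List (α → α)) :
    listComp (fs ++ gs) = listComp fs ∘ listComp gs := by
  induction fs with
  | nil => rfl
  | cons f fs ih => simp only [listComp, List.cons_append, List.foldr_cons] at *; rw [ih]; rfl

variable [Fintype P]

theorem exists_max_above {S : Set P} {x : P} (hx : x ∈ S) :
    ∃ m, m ∈ S ∧ x ≤ m ∧ ∀ y, m < y → y ∉ S := by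
  obtain ⟨m, hm, hmax⟩ := Set.Finite.exists_maximalFor id {y ∈ S | x ≤ y}
    (Set.toFinite _) ⟨x, hx, le_refl x⟩
  refine ⟨m, hm.1, hm.2, fun y hy hyS => ?_⟩
  exact absurd (hmax ⟨hyS, hm.2.trans hy.le⟩ hy.le) (fun h => lt_irrefl m (hy.trans_le h))

theorem exists_min_below {S : Set P} {x : P} (hx : x ∈ S) :
    ∃ m, m ∈ S ∧ m ≤ x ∧ ∀ y, y < m → y ∉ S := by
  obtain ⟨m, hm, hmin⟩ := Set.Finite.exists_minimalFor id {y ∈ S | y ≤ x}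
    (Set.toFinite _) ⟨x, hx, le_refl x⟩
  refine ⟨m, hm.1, hm.2, fun y hy hyS => ?_⟩
  exact absurd (hmin ⟨hyS, hy.le.trans hm.2⟩ hy.le) (fun h => lt_irrefl y (hy.trans_le h))

theorem exists_le_covby {a b : P} (h : a < b) : ∃ c, a ≤ c ∧ c ⋖ b := by
  obtain ⟨m, hm, _, hmax⟩ := exists_max_above (S := {y | a ≤ y ∧ y < b}) ⟨le_refl a, h⟩
  exact ⟨m, hm.1, hm.2, fun d hmd hdb => hmax d hmd ⟨hm.1.trans hmd.le, hdb⟩⟩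

theorem exists_covby_le {a b : P} (h : a < b) : ∃ c, a ⋖ c ∧ c ≤ b := by
  obtain ⟨m, hm, _, hmin⟩ := exists_min_below (S := {y | a < y ∧ y ≤ b}) ⟨h, le_refl b⟩
  exact ⟨m, ⟨hm.1, fun d had hdm => hmin d hdm ⟨had, hdm.le.trans hm.2⟩⟩, hm.2⟩

theorem rk_lt_of_lt (rk : P → ℕ) (hrkcov : ∀ x y : P, x ⋖ y → rk y = rk x + 1) :
    ∀ a b : P, a < b → rk a < rk b := by
  intro a
  induction a using (wellFounded_gt (α := P)).induction with
  | _ a IH =>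
    intro b hab
    obtain ⟨c, hac, hcb⟩ := exists_covby_le hab
    have h1 := hrkcov a c hac
    rcases eq_or_lt_of_le hcb with rfl | h
    · omega
    · have h2 := IH c hac.lt b h
      omega

/-- The "toggle target condition" for order ideal toggles. -/
def Tc (K : Set P) (x : P) : Prop :=
  (x ∈ K ∧ ∃ c, x ⋖ c ∧ c ∈ K) ∨ (x ∉ K ∧ ∀ z, z ⋖ x → z ∈ K)

/-- Maximal elements of an order ideal. -/
def Mset (K : OrderIdealSub P) : Set P := {x | x ∈ K.1 ∧ ∀ y, x ⋖ y → y ∉ K.1}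

theorem mem_Mset_iff {K : OrderIdealSub P} {x : P} :
    x ∈ Mset K ↔ x ∈ K.1 ∧ ∀ y, x < y → y ∉ K.1 := by
  constructor
  · rintro ⟨hx, hmax⟩
    refine ⟨hx, fun y hy hyK => ?_⟩
    obtain ⟨c, hc, hcy⟩ := exists_covby_le hy
    exact hmax c hc (K.2 hcy hyK)
  · rintro ⟨hx, hmax⟩
    exact ⟨hx, fun y hy => hmax y hy.lt⟩

theorem togFun_mem_ne (e : P) (K : OrderIdealSub P) {x : P} (hx : x ≠ e) :
    x ∈ (togFun e K).1 ↔ x ∈ K.1 := by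
  unfold togFun
  split_ifs <;> simp_all [Set.mem_diff, Set.mem_insert_iff]

theorem lowerSet_diff_iff {K : OrderIdealSub P} {e : P} (he : e ∈ K.1) :
    IsLowerSet (K.1 \ {e}) ↔ ∀ y, e < y → y ∉ K.1 := by
  constructor
  · intro h y hey hyK
    have : e ∈ K.1 \ {e} := h hey.le ⟨hyK, fun h' => absurd h' hey.ne'⟩
    exact this.2 rfl
  · intro h a b hba ha
    refine ⟨K.2 hba ha.1, fun hbe => ?_⟩
    rw [Set.mem_singleton_iff] at hbe
    subst hbe
    rcases eq_or_lt_of_le hba with rfl | hlt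
    · exact ha.2 rfl
    · exact h a hlt ha.1

theorem lowerSet_insert_iff {K : OrderIdealSub P} {e : P} :
    IsLowerSet (insert e K.1) ↔ ∀ z, z < e → z ∈ K.1 := by
  constructor
  · intro h z hz
    rcases h hz.le (Set.mem_insert e K.1) with h' | h'
    · exact absurd h' hz.ne
    · exact h'
  · intro h a b hba ha
    rcases ha with rfl | ha
    · rcases eq_or_lt_of_le hba with rfl | hlt
      · exact Set.mem_insert _ _
      · exact Set.mem_insert_of_mem _ (h b hlt)
    · exact Set.mem_insert_of_mem _ (K.2 hba ha)

theorem togFun_mem_self (e : P) (K : OrderIdealSub P) :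
    e ∈ (togFun e K).1 ↔ Tc K.1 e := by
  have hgt : (∃ y, e < y ∧ y ∈ K.1) ↔ ∃ c, e ⋖ c ∧ c ∈ K.1 := by
    constructor
    · rintro ⟨y, hy, hyK⟩
      obtain ⟨c, hc, hcy⟩ := exists_covby_le hy
      exact ⟨c, hc, K.2 hcy hyK⟩
    · rintro ⟨c, hc, hcK⟩
      exact ⟨c, hc.lt, hcK⟩
  have hlt : (∀ z, z < e → z ∈ K.1) ↔ ∀ z, z ⋖ e → z ∈ K.1 := by
    constructor
    · intro h z hz
      exact h z hz.lt
    · intro h z hz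
      obtain ⟨c, hzc, hce⟩ := exists_le_covby hz
      exact K.2 hzc (h c hce)
  unfold togFun Tc
  by_cases he : e ∈ K.1
  · rw [dif_pos he]
    by_cases h2 : IsLowerSet (K.1 \ {e})
    · rw [dif_pos h2]
      rw [lowerSet_diff_iff he] at h2
      refine iff_of_false (fun hc => hc.2 rfl) ?_
      rintro (⟨-, c, hc, hcK⟩ | ⟨hne, -⟩)
      · exact absurd hcK (h2 c hc.lt)
      · exact absurd he hne
    · rw [dif_neg h2]
      rw [lowerSet_diff_iff he] at h2
      push_neg at h2
      obtain ⟨y, hy, hyK⟩ := h2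
      exact iff_of_true he (Or.inl ⟨he, hgt.mp ⟨y, hy, hyK⟩⟩)
  · rw [dif_neg he]
    by_cases h2 : IsLowerSet (insert e K.1)
    · rw [dif_pos h2]
      rw [lowerSet_insert_iff] at h2
      exact iff_of_true (Set.mem_insert _ _) (Or.inr ⟨he, hlt.mp h2⟩)
    · rw [dif_neg h2]
      rw [lowerSet_insert_iff] at h2
      refine iff_of_false he ?_
      rintro (⟨heK, -⟩ | ⟨-, h⟩)
      · exact he heK
      · exact h2 (hlt.mpr h)

theorem atogFun_mem_ne (e : P) (B : AntichainSub P) {x : P} (hx : x ≠ e) :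
    x ∈ (atogFun e B).1 ↔ x ∈ B.1 := by
  unfold atogFun
  split_ifs <;> simp_all [Set.mem_diff, Set.mem_insert_iff]

theorem atogFun_mem_self (e : P) (B : AntichainSub P) :
    e ∈ (atogFun e B).1 ↔ (e ∉ B.1 ∧ ∀ a ∈ B.1, a ≠ e → ¬a ≤ e ∧ ¬e ≤ a) := by
  unfold atogFun
  by_cases he : e ∈ B.1
  · rw [dif_pos he]
    refine iff_of_false (fun hc => hc.2 rfl) ?_
    rintro ⟨hne, -⟩; exact absurd he hne
  · rw [dif_neg he]
    by_cases h2 : IsAntichain (· ≤ ·) (insert e B.1)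
    · rw [dif_pos h2]
      rw [isAntichain_insert] at h2
      exact iff_of_true (Set.mem_insert _ _)
        ⟨he, fun a ha hane => ⟨(h2.2 ha (Ne.symm hane)).2, (h2.2 ha (Ne.symm hane)).1⟩⟩
    · rw [dif_neg h2]
      refine iff_of_false he ?_
      rintro ⟨-, h⟩
      refine h2 (isAntichain_insert.mpr ⟨B.2, fun b hb hne => ?_⟩)
      exact ⟨(h b hb (Ne.symm hne)).2, (h b hb (Ne.symm hne)).1⟩

end GyrAux2

section GyrAux3
set_option linter.unusedSectionVars false
set_option maxHeartbeats 1000000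

variable {P : Type*} [PartialOrder P] [Fintype P]

theorem listTog_sem (rk : P → ℕ) (hrkcov : ∀ x y : P, x ⋖ y → rk y = rk x + 1)
    (p : ℕ) (l : List P) (hl : l.Nodup) (hlp : ∀ x ∈ l, rk x % 2 = p)
    (K : OrderIdealSub P) :
    ∀ x, x ∈ (listComp (l.map togFun) K).1 ↔
      (if x ∈ l then Tc K.1 x else x ∈ K.1) := by
  induction l with
  | nil => intro x; simp [listComp]
  | cons e l ih =>
    have hnd := List.nodup_cons.mp hl
    have hstate := ih hnd.2 (fun y hy => hlp y (List.mem_cons_of_mem _ hy))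
    intro x
    have hrw : listComp ((e :: l).map togFun) K = togFun e (listComp (l.map togFun) K) := rfl
    rw [hrw]
    set K' := listComp (l.map togFun) K with hK'
    by_cases hxe : x = e
    · subst hxe
      rw [togFun_mem_self, if_pos List.mem_cons_self]
      have hxl : x ∉ l := hnd.1
      have hxp : rk x % 2 = p := hlp x List.mem_cons_self
      have hxK' : x ∈ K'.1 ↔ x ∈ K.1 := by rw [hstate x, if_neg hxl]
      have hcovup : ∀ c, x ⋖ c → (c ∈ K'.1 ↔ c ∈ K.1) := by
        intro c hc
        rw [hstate c, if_neg]
        intro hcl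
        have h1 := hlp c (List.mem_cons_of_mem _ hcl)
        have h2 := hrkcov x c hc
        omega
      have hcovdn : ∀ z, z ⋖ x → (z ∈ K'.1 ↔ z ∈ K.1) := by
        intro z hz
        rw [hstate z, if_neg]
        intro hzl
        have h1 := hlp z (List.mem_cons_of_mem _ hzl)
        have h2 := hrkcov z x hz
        omega
      unfold Tc
      constructor
      · rintro (⟨h1, c, hc, hcK⟩ | ⟨h1, h2⟩)
        · exact Or.inl ⟨hxK'.mp h1, c, hc, (hcovup c hc).mp hcK⟩
        · exact Or.inr ⟨fun h => h1 (hxK'.mpr h), fun z hz => (hcovdn z hz).mp (h2 z hz)⟩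
      · rintro (⟨h1, c, hc, hcK⟩ | ⟨h1, h2⟩)
        · exact Or.inl ⟨hxK'.mpr h1, c, hc, (hcovup c hc).mpr hcK⟩
        · exact Or.inr ⟨fun h => h1 (hxK'.mp h), fun z hz => (hcovdn z hz).mpr (h2 z hz)⟩
    · rw [togFun_mem_ne e K' hxe, hstate x]
      have : (x ∈ e :: l) ↔ (x ∈ l) := by simp [List.mem_cons, hxe]
      rw [if_congr this rfl rfl]

theorem listAtog_sem (rk : P → ℕ) (hmono : ∀ a b : P, a < b → rk a < rk b)
    (i : ℕ) (l : List P) (hl : l.Nodup) (hli : ∀ x ∈ l, rk x = i)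
    (B : AntichainSub P) :
    ∀ x, x ∈ (listComp (l.map atogFun) B).1 ↔
      (if x ∈ l then (x ∉ B.1 ∧ ∀ a ∈ B.1, rk a ≠ i → ¬a ≤ x ∧ ¬x ≤ a) else x ∈ B.1) := by
  have hsame : ∀ a b : P, rk a = rk b → a ≠ b → ¬a ≤ b ∧ ¬b ≤ a := by
    intro a b hr hne
    constructor
    · intro h
      rcases eq_or_lt_of_le h with rfl | h'
      · exact hne rfl
      · exact absurd hr (hmono a b h').ne
    · intro h
      rcases eq_or_lt_of_le h with rfl | h'
      · exact hne rfl
      · exact absurd hr.symm (hmono b a h').ne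
  induction l with
  | nil => intro x; simp [listComp]
  | cons e l ih =>
    have hnd := List.nodup_cons.mp hl
    have hstate := ih hnd.2 (fun y hy => hli y (List.mem_cons_of_mem _ hy))
    intro x
    have hrw : listComp ((e :: l).map atogFun) B = atogFun e (listComp (l.map atogFun) B) := rfl
    rw [hrw]
    set B' := listComp (l.map atogFun) B with hB'
    by_cases hxe : x = e
    · subst hxe
      rw [atogFun_mem_self, if_pos List.mem_cons_self]
      have hxl : x ∉ l := hnd.1
      have hxi : rk x = i := hli x List.mem_cons_self
      have hxB' : x ∈ B'.1 ↔ x ∈ B.1 := by rw [hstate x, if_neg hxl]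
      constructor
      · rintro ⟨h1, h2⟩
        refine ⟨fun h => h1 (hxB'.mpr h), fun a ha hai => ?_⟩
        have haB' : a ∈ B'.1 := by
          rw [hstate a, if_neg]
          · exact ha
          · intro hal; exact hai (hli a (List.mem_cons_of_mem _ hal))
        have hane : a ≠ x := fun h => hai (h ▸ hxi)
        exact h2 a haB' hane
      · rintro ⟨h1, h2⟩
        refine ⟨fun h => h1 (hxB'.mp h), fun a ha hane => ?_⟩
        rw [hstate a] at ha
        by_cases hal : a ∈ l
        · rw [if_pos hal] at ha
          exact hsame a x ((hli a (List.mem_cons_of_mem _ hal)).trans hxi.symm) hane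
        · rw [if_neg hal] at ha
          by_cases hai : rk a = i
          · exact hsame a x (hai.trans hxi.symm) hane
          · exact h2 a ha hai
    · rw [atogFun_mem_ne e B' hxe, hstate x]
      have : (x ∈ e :: l) ↔ (x ∈ l) := by simp [List.mem_cons, hxe]
      rw [if_congr this rfl rfl]

end GyrAux3

section GyrAux4
set_option linter.unusedSectionVars false
set_option maxHeartbeats 1000000

variable {P : Type*} [PartialOrder P] [Fintype P]

theorem mem_idealOf_of_A (A : AntichainSub P) {a : P} (ha : a ∈ A.1) :
    a ∈ (idealOf A).1 := ⟨a, ha, le_refl a⟩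

theorem not_mem_idealOf_of_A_lt (A : AntichainSub P) {a c : P} (ha : a ∈ A.1) (hac : a < c) :
    c ∉ (idealOf A).1 := by
  rintro ⟨b, hb, hcb⟩
  have hab : a ≤ b := hac.le.trans hcb
  have hne : a ≠ b := by rintro rfl; exact lt_irrefl a (lt_of_lt_of_le hac hcb)
  exact A.2 ha hb hne hab

theorem mem_A_iff_max (A : AntichainSub P) {y : P} :
    y ∈ A.1 ↔ y ∈ (idealOf A).1 ∧ ∀ c, y < c → c ∉ (idealOf A).1 := by
  constructor
  · intro hy
    exact ⟨mem_idealOf_of_A A hy, fun c hc => not_mem_idealOf_of_A_lt A hy hc⟩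
  · rintro ⟨⟨a, ha, hya⟩, hmax⟩
    rcases eq_or_lt_of_le hya with rfl | h
    · exact ha
    · exact absurd (mem_idealOf_of_A A ha) (hmax a h)

theorem evenA_not_mem (rk : P → ℕ) (A : AntichainSub P) (Jpp : OrderIdealSub P)
    (hEv : ∀ y, rk y % 2 = 0 → (y ∈ Jpp.1 ↔ Tc (idealOf A).1 y)) :
    ∀ a ∈ A.1, rk a % 2 = 0 → a ∉ Jpp.1 := by
  intro a ha hae hP
  rcases (hEv a hae).mp hP with ⟨h1, c, hc, hcJ⟩ | ⟨h1, -⟩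
  · exact not_mem_idealOf_of_A_lt A ha hc.lt hcJ
  · exact h1 (mem_idealOf_of_A A ha)

theorem claimO (rk : P → ℕ) (A : AntichainSub P) (Jpp : OrderIdealSub P)
    (hmono : ∀ a b : P, a < b → rk a < rk b)
    (hrkcov : ∀ x y : P, x ⋖ y → rk y = rk x + 1)
    (hEv : ∀ y, rk y % 2 = 0 → (y ∈ Jpp.1 ↔ Tc (idealOf A).1 y))
    (hOdd : ∀ x, rk x % 2 = 1 → (x ∈ Jpp.1 ↔
      ((x ∈ (idealOf A).1 ∧ ∃ c, x ⋖ c ∧ c ∈ Jpp.1) ∨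
       (x ∉ (idealOf A).1 ∧ ∀ z, z ⋖ x → z ∈ Jpp.1)))) :
    ∀ n x, rk x = n → rk x % 2 = 1 →
      (x ∈ Mset Jpp ↔
        (x ∉ (idealOf A).1 ∧ (∀ a ∈ A.1, rk a % 2 = 0 → ¬a < x) ∧
          (∀ m ∈ Mset Jpp, rk m % 2 = 1 → ¬m < x))) := by
  have evenA := evenA_not_mem rk A Jpp hEv
  intro n
  induction n using Nat.strong_induction_on with
  | _ n IH =>
    intro x hxn hxodd
    constructor
    · rintro ⟨hxP, hxmax⟩
      have hxJ : x ∉ (idealOf A).1 := by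
        intro hxJ
        rcases (hOdd x hxodd).mp hxP with ⟨-, c, hc, hcP⟩ | ⟨h1, -⟩
        · exact hxmax c hc hcP
        · exact h1 hxJ
      refine ⟨hxJ, fun a ha hae hax => ?_, fun m hm hmo hmx => ?_⟩
      · exact evenA a ha hae (Jpp.2 hax.le hxP)
      · obtain ⟨c, hc, hcx⟩ := exists_covby_le hmx
        exact hm.2 c hc (Jpp.2 hcx hxP)
    · rintro ⟨hxJ, hAe, hMo⟩
      have hcovs : ∀ z, z ⋖ x → z ∈ Jpp.1 := by
        intro z hz
        have hze : rk z % 2 = 0 := by have := hrkcov z x hz; omega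
        by_cases hzJ : z ∈ (idealOf A).1
        · have hzA : z ∉ A.1 := fun hzA => hAe z hzA hze hz.lt
          rw [mem_A_iff_max A] at hzA
          push_neg at hzA
          obtain ⟨c', hzc', hc'J⟩ := hzA hzJ
          obtain ⟨c, hc, hcc'⟩ := exists_covby_le hzc'
          exact (hEv z hze).mpr (Or.inl ⟨hzJ, c, hc, (idealOf A).2 hcc' hc'J⟩)
        · have hall : ∀ w, w < z → w ∈ (idealOf A).1 := by
            by_contra hcon
            push_neg at hcon
            obtain ⟨w, hwz, hwJ⟩ := hcon
            obtain ⟨m, hmT, -, hmax⟩ := exists_max_above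
              (S := {v | v < z ∧ v ∉ (idealOf A).1}) ⟨hwz, hwJ⟩
            have hmz : m ⋖ z := by
              obtain ⟨c, hmc, hcz⟩ := exists_covby_le hmT.1
              rcases eq_or_lt_of_le hcz with rfl | h
              · exact hmc
              · by_cases hcJ : c ∈ (idealOf A).1
                · exact absurd ((idealOf A).2 hmc.le hcJ) hmT.2
                · exact absurd (show c ∈ {v | v < z ∧ v ∉ (idealOf A).1} from ⟨h, hcJ⟩)
                    (hmax c hmc.lt)
            have hmodd : rk m % 2 = 1 := by
              have := hrkcov m z hmz; omega
            have hmn : rk m < n := hxn ▸ hmono m x (hmT.1.trans hz.lt)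
            have hmM : m ∈ Mset Jpp := by
              refine (IH (rk m) hmn m rfl hmodd).mpr ⟨hmT.2, ?_, ?_⟩
              · intro a ha hae ham
                exact hAe a ha hae (ham.trans (hmT.1.trans hz.lt))
              · intro m' hm' hm'o hm'm
                exact hMo m' hm' hm'o (hm'm.trans (hmT.1.trans hz.lt))
            exact hMo m hmM hmodd (hmT.1.trans hz.lt)
          exact (hEv z hze).mpr (Or.inr ⟨hzJ, fun w hw => hall w hw.lt⟩)
      have hxP : x ∈ Jpp.1 := (hOdd x hxodd).mpr (Or.inr ⟨hxJ, hcovs⟩)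
      refine ⟨hxP, fun y hy hyP => ?_⟩
      have hye : rk y % 2 = 0 := by have := hrkcov x y hy; omega
      rcases (hEv y hye).mp hyP with ⟨hyJ, -⟩ | ⟨-, hzz⟩
      · exact hxJ ((idealOf A).2 hy.le hyJ)
      · exact hxJ (hzz x hy)

theorem claimE (rk : P → ℕ) (A : AntichainSub P) (Jpp : OrderIdealSub P)
    (hmono : ∀ a b : P, a < b → rk a < rk b)
    (hrkcov : ∀ x y : P, x ⋖ y → rk y = rk x + 1)
    (hEv : ∀ y, rk y % 2 = 0 → (y ∈ Jpp.1 ↔ Tc (idealOf A).1 y))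
    (hOdd : ∀ x, rk x % 2 = 1 → (x ∈ Jpp.1 ↔
      ((x ∈ (idealOf A).1 ∧ ∃ c, x ⋖ c ∧ c ∈ Jpp.1) ∨
       (x ∉ (idealOf A).1 ∧ ∀ z, z ⋖ x → z ∈ Jpp.1)))) :
    ∀ x, rk x % 2 = 0 →
      (x ∈ Mset Jpp ↔
        (x ∉ A.1 ∧ (∀ a ∈ Mset Jpp, ¬x < a) ∧
          (∀ a ∈ A.1, rk a % 2 = 0 → ¬a < x) ∧
          (∀ m ∈ Mset Jpp, rk m % 2 = 1 → ¬m < x))) := by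
  have evenA := evenA_not_mem rk A Jpp hEv
  intro x hxe
  constructor
  · rintro ⟨hxP, hxmax⟩
    refine ⟨fun hxA => evenA x hxA hxe hxP, ?_, ?_, ?_⟩
    · intro a ha hxa
      obtain ⟨c, hc, hca⟩ := exists_covby_le hxa
      exact hxmax c hc (Jpp.2 hca ha.1)
    · intro a ha hae hax
      exact evenA a ha hae (Jpp.2 hax.le hxP)
    · intro m hm hmo hmx
      obtain ⟨c, hc, hcx⟩ := exists_covby_le hmx
      exact hm.2 c hc (Jpp.2 hcx hxP)
  · rintro ⟨hxA, hM, hAe, hMo⟩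
    have hxP : x ∈ Jpp.1 := by
      by_cases hxJ : x ∈ (idealOf A).1
      · rw [mem_A_iff_max A] at hxA
        push_neg at hxA
        obtain ⟨c', hxc', hc'J⟩ := hxA hxJ
        obtain ⟨c, hc, hcc'⟩ := exists_covby_le hxc'
        exact (hEv x hxe).mpr (Or.inl ⟨hxJ, c, hc, (idealOf A).2 hcc' hc'J⟩)
      · have hall : ∀ w, w < x → w ∈ (idealOf A).1 := by
          by_contra hcon
          push_neg at hcon
          obtain ⟨w, hwx, hwJ⟩ := hcon
          obtain ⟨m, hmT, -, hmax⟩ := exists_max_above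
            (S := {v | v < x ∧ v ∉ (idealOf A).1}) ⟨hwx, hwJ⟩
          have hmx : m ⋖ x := by
            obtain ⟨c, hmc, hcx⟩ := exists_covby_le hmT.1
            rcases eq_or_lt_of_le hcx with rfl | h
            · exact hmc
            · by_cases hcJ : c ∈ (idealOf A).1
              · exact absurd ((idealOf A).2 hmc.le hcJ) hmT.2
              · exact absurd (show c ∈ {v | v < x ∧ v ∉ (idealOf A).1} from ⟨h, hcJ⟩)
                  (hmax c hmc.lt)
          have hmodd : rk m % 2 = 1 := by
            have := hrkcov m x hmx; omega
          have hmM : m ∈ Mset Jpp :=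
            (claimO rk A Jpp hmono hrkcov hEv hOdd (rk m) m rfl hmodd).mpr
              ⟨hmT.2, fun a ha hae ham => hAe a ha hae (ham.trans hmT.1),
               fun m' hm' hm'o hm'm => hMo m' hm' hm'o (hm'm.trans hmT.1)⟩
          exact hMo m hmM hmodd hmT.1
        exact (hEv x hxe).mpr (Or.inr ⟨hxJ, fun w hw => hall w hw.lt⟩)
    refine ⟨hxP, fun y hy hyP => ?_⟩
    obtain ⟨m, hmP, hym, hmmax⟩ := exists_max_above hyP
    have hmM : m ∈ Mset Jpp := ⟨hmP, fun c hc => hmmax c hc.lt⟩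
    exact hM m hmM (lt_of_lt_of_le hy.lt hym)

end GyrAux4

set_option linter.unusedSectionVars false
set_option maxHeartbeats 4000000

/-- For a finite graded poset of rank `r`, the order ideal generated by `Gyr_A(A)` is
`Gyr_J` applied to the order ideal generated by `A`; i.e. `I ∘ Gyr_A = Gyr_J ∘ I`.
Here `Gyr_A` first applies the odd rank antichain toggles from the bottom rank up, then
the even rank antichain toggles from the top rank down, and `Gyr_J` applies the order
ideal toggles of all elements of even rank first (in any order `lev`), then those of all
elements of odd rank (in any order `lodd`). `L i` enumerates the elements of rank `i`. -/
theorem gyration_commutes_with_ideal_generation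
    (P : Type*) [PartialOrder P] [Fintype P] (rk : P → ℕ) (r : ℕ)
    (hrk0 : ∀ x : P, IsMin x → rk x = 0)
    (hrkcov : ∀ x y : P, x ⋖ y → rk y = rk x + 1)
    (hrkmax : ∀ x : P, IsMax x → rk x = r)
    (L : ℕ → List P) (hL : ∀ i, (L i).Nodup ∧ ∀ x : P, x ∈ L i ↔ rk x = i)
    (lev : List P) (hlev : lev.Nodup ∧ ∀ x : P, x ∈ lev ↔ rk x % 2 = 0)
    (lodd : List P) (hlodd : lodd.Nodup ∧ ∀ x : P, x ∈ lodd ↔ rk x % 2 = 1)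
    (A : AntichainSub P) :
    idealOf
        ((listComp (((List.range (r + 1)).filter fun j => j % 2 = 0).map fun i =>
            listComp ((L i).map atogFun)) ∘
          listComp ((((List.range (r + 1)).filter fun j => j % 2 = 1).reverse).map fun i =>
            listComp ((L i).map atogFun))) A)
      = (listComp (lodd.map togFun) ∘ listComp (lev.map togFun)) (idealOf A) := by
  classical
  have hmono : ∀ a b : P, a < b → rk a < rk b := rk_lt_of_lt rk hrkcov
  have hrler : ∀ x : P, rk x ≤ r := by
    intro x
    obtain ⟨m, -, hxm, hmax⟩ := exists_max_above (S := (Set.univ : Set P)) (Set.mem_univ x)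
    have hm : IsMax m := by
      intro y hmy
      by_contra hy
      exact hmax y (lt_of_le_not_ge hmy hy) (Set.mem_univ y)
    have hmr := hrkmax m hm
    rcases eq_or_lt_of_le hxm with rfl | h
    · omega
    · have := hmono x m h; omega
  simp only [Function.comp_apply]
  set J : OrderIdealSub P := idealOf A with hJdef
  set J1 : OrderIdealSub P := listComp (lev.map togFun) J with hJ1def
  set Jpp : OrderIdealSub P := listComp (lodd.map togFun) J1 with hJppdef
  have hJ1sem : ∀ x, x ∈ J1.1 ↔ (if rk x % 2 = 0 then Tc J.1 x else x ∈ J.1) := by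
    intro x
    have h := listTog_sem rk hrkcov 0 lev hlev.1 (fun y hy => (hlev.2 y).mp hy) J x
    rw [← hJ1def] at h
    by_cases hx : rk x % 2 = 0
    · rw [h, if_pos ((hlev.2 x).mpr hx), if_pos hx]
    · rw [h, if_neg (fun hc => hx ((hlev.2 x).mp hc)), if_neg hx]
  have hJppsem : ∀ x, x ∈ Jpp.1 ↔ (if rk x % 2 = 1 then Tc J1.1 x else x ∈ J1.1) := by
    intro x
    have h := listTog_sem rk hrkcov 1 lodd hlodd.1 (fun y hy => (hlodd.2 y).mp hy) J1 x
    rw [← hJppdef] at h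
    by_cases hx : rk x % 2 = 1
    · rw [h, if_pos ((hlodd.2 x).mpr hx), if_pos hx]
    · rw [h, if_neg (fun hc => hx ((hlodd.2 x).mp hc)), if_neg hx]
  have hEv : ∀ y, rk y % 2 = 0 → (y ∈ Jpp.1 ↔ Tc J.1 y) := by
    intro y hy
    rw [hJppsem y, if_neg (by omega), hJ1sem y, if_pos hy]
  have hOdd : ∀ x, rk x % 2 = 1 → (x ∈ Jpp.1 ↔
      ((x ∈ J.1 ∧ ∃ c, x ⋖ c ∧ c ∈ Jpp.1) ∨
       (x ∉ J.1 ∧ ∀ z, z ⋖ x → z ∈ Jpp.1))) := by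
    intro x hx
    rw [hJppsem x, if_pos hx]
    have hxJ1 : x ∈ J1.1 ↔ x ∈ J.1 := by rw [hJ1sem x, if_neg (by omega)]
    have hup : ∀ c, x ⋖ c → (c ∈ J1.1 ↔ c ∈ Jpp.1) := by
      intro c hc
      have hce : rk c % 2 = 0 := by have := hrkcov x c hc; omega
      rw [hJ1sem c, if_pos hce, hEv c hce]
    have hdn : ∀ z, z ⋖ x → (z ∈ J1.1 ↔ z ∈ Jpp.1) := by
      intro z hz
      have hze : rk z % 2 = 0 := by have := hrkcov z x hz; omega
      rw [hJ1sem z, if_pos hze, hEv z hze]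
    unfold Tc
    constructor
    · rintro (⟨h1, c, hc, hcK⟩ | ⟨h1, h2⟩)
      · exact Or.inl ⟨hxJ1.mp h1, c, hc, (hup c hc).mp hcK⟩
      · exact Or.inr ⟨fun h => h1 (hxJ1.mpr h), fun z hz => (hdn z hz).mp (h2 z hz)⟩
    · rintro (⟨h1, c, hc, hcK⟩ | ⟨h1, h2⟩)
      · exact Or.inl ⟨hxJ1.mpr h1, c, hc, (hup c hc).mpr hcK⟩
      · exact Or.inr ⟨fun h => h1 (hxJ1.mp h), fun z hz => (hdn z hz).mpr (h2 z hz)⟩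
  have hCO := claimO rk A Jpp hmono hrkcov hEv hOdd
  have hCE := claimE rk A Jpp hmono hrkcov hEv hOdd
  set gfun : ℕ → AntichainSub P → AntichainSub P :=
    (fun i => listComp ((L i).map atogFun)) with hgfun
  -- Odd phase
  have hQ : ∀ n,
      (listComp ((((List.range n).filter fun j => j % 2 = 1).reverse).map gfun) A).1
        = {a | a ∈ A.1 ∧ (rk a % 2 = 0 ∨ n ≤ rk a)} ∪
          {m | m ∈ Mset Jpp ∧ rk m % 2 = 1 ∧ rk m < n} := by
    intro n
    induction n with
    | zero =>
      ext x
      simp [listComp, Nat.zero_le]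
    | succ n ih =>
      rw [List.range_succ, List.filter_append, List.reverse_append]
      by_cases hn : n % 2 = 1
      · have hfil : (List.filter (fun j => decide (j % 2 = 1)) [n]) = [n] := by
          simp [hn]
        rw [hfil]
        simp only [List.reverse_singleton, List.singleton_append, List.map_cons]
        rw [listComp_cons']
        simp only [Function.comp_apply]
        set X := listComp (((List.filter (fun j => decide (j % 2 = 1)) (List.range n)).reverse).map gfun) A with hX
        have hgB : gfun n X = listComp ((L n).map atogFun) X := by rw [hgfun]
        rw [hgB]
        have hsem := listAtog_sem rk hmono n (L n) (hL n).1 (fun y hy => ((hL n).2 y).mp hy) X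
        ext x
        simp only [Set.mem_union, Set.mem_setOf_eq]
        rw [hsem x]
        by_cases hx : rk x = n
        · rw [if_pos (((hL n).2 x).mpr hx)]
          have hxodd : rk x % 2 = 1 := by omega
          have hgoal : x ∈ Mset Jpp ↔
              ((x ∈ A.1 ∧ (rk x % 2 = 0 ∨ n + 1 ≤ rk x)) ∨
               (x ∈ Mset Jpp ∧ rk x % 2 = 1 ∧ rk x < n + 1)) := by
            constructor
            · intro h; exact Or.inr ⟨h, hxodd, by omega⟩
            · rintro (⟨-, h⟩ | ⟨h, -⟩)
              · omega
              · exact h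
          rw [← hgoal]
          have hmemX : ∀ y, y ∈ X.1 ↔
              ((y ∈ A.1 ∧ (rk y % 2 = 0 ∨ n ≤ rk y)) ∨
               (y ∈ Mset Jpp ∧ rk y % 2 = 1 ∧ rk y < n)) := by
            intro y
            rw [ih]
            rw [Set.mem_union, Set.mem_setOf_eq, Set.mem_setOf_eq]
          constructor
          · rintro ⟨hxX, hcond⟩
            refine (hCO (rk x) x rfl hxodd).mpr ⟨?_, ?_, ?_⟩
            · rintro ⟨b, hb, hxb⟩
              rcases eq_or_lt_of_le hxb with rfl | h'
              · exact hxX ((hmemX x).mpr (Or.inl ⟨hb, Or.inr (by omega)⟩))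
              · have hbn : rk b ≠ n := by have := hmono x b h'; omega
                have hbX : b ∈ X.1 := (hmemX b).mpr (Or.inl ⟨hb, Or.inr (by
                  have := hmono x b h'; omega)⟩)
                exact (hcond b hbX hbn).2 h'.le
            · intro a ha hae hax
              have han : rk a ≠ n := by have := hmono a x hax; omega
              have haX : a ∈ X.1 := (hmemX a).mpr (Or.inl ⟨ha, Or.inl hae⟩)
              exact (hcond a haX han).1 hax.le
            · intro m hm hmo hmx
              have hmn : rk m ≠ n := by have := hmono m x hmx; omega
              have hmX : m ∈ X.1 := (hmemX m).mpr (Or.inr ⟨hm, hmo, by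
                have := hmono m x hmx; omega⟩)
              exact (hcond m hmX hmn).1 hmx.le
          · intro hxM
            obtain ⟨hxJ, hAe, hMo⟩ := (hCO (rk x) x rfl hxodd).mp hxM
            constructor
            · intro hxX
              rcases (hmemX x).mp hxX with ⟨hxA, -⟩ | ⟨-, -, hlt⟩
              · exact hxJ (mem_idealOf_of_A A hxA)
              · omega
            · intro a haX han
              have hane : a ≠ x := fun h => han (h ▸ hx)
              constructor
              · intro hax
                have hax' : a < x := lt_of_le_of_ne hax hane
                rcases (hmemX a).mp haX with ⟨haA, hpar⟩ | ⟨hmM, hmo, -⟩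
                · have : rk a < n := by have := hmono a x hax'; omega
                  rcases hpar with hae | hge
                  · exact hAe a haA hae hax'
                  · omega
                · exact hMo a hmM hmo hax'
              · intro hxa
                have hxa' : x < a := lt_of_le_of_ne hxa (Ne.symm hane)
                rcases (hmemX a).mp haX with ⟨haA, -⟩ | ⟨-, -, hlt⟩
                · exact hxJ ⟨a, haA, hxa⟩
                · have := hmono x a hxa'; omega
        · rw [if_neg (fun hc => hx (((hL n).2 x).mp hc))]
          rw [ih]
          simp only [Set.mem_union, Set.mem_setOf_eq]
          constructor
          · rintro (⟨ha, hp⟩ | ⟨hm, ho, hlt⟩)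
            · exact Or.inl ⟨ha, by omega⟩
            · exact Or.inr ⟨hm, ho, by omega⟩
          · rintro (⟨ha, hp⟩ | ⟨hm, ho, hlt⟩)
            · exact Or.inl ⟨ha, by omega⟩
            · exact Or.inr ⟨hm, ho, by omega⟩
      · have hfil : (List.filter (fun j => decide (j % 2 = 1)) [n]) = [] := by
          simp [hn]
        rw [hfil]
        simp only [List.reverse_nil, List.nil_append]
        rw [ih]
        ext x
        simp only [Set.mem_union, Set.mem_setOf_eq]
        constructor
        · rintro (⟨ha, hp⟩ | ⟨hm, ho, hlt⟩)
          · exact Or.inl ⟨ha, by omega⟩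
          · exact Or.inr ⟨hm, ho, by omega⟩
        · rintro (⟨ha, hp⟩ | ⟨hm, ho, hlt⟩)
          · exact Or.inl ⟨ha, by omega⟩
          · exact Or.inr ⟨hm, ho, by omega⟩
  -- Even phase
  have hP : ∀ n (B : AntichainSub P),
      B.1 = {a | a ∈ A.1 ∧ rk a % 2 = 0 ∧ rk a < n} ∪
            {m | m ∈ Mset Jpp ∧ (rk m % 2 = 1 ∨ n ≤ rk m)} →
      (listComp (((List.range n).filter fun j => j % 2 = 0).map gfun) B).1 = Mset Jpp := by
    intro n
    induction n with
    | zero =>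
      intro B hB
      have : (listComp ((((List.range 0).filter fun j => j % 2 = 0)).map gfun) B) = B := rfl
      rw [this, hB]
      ext x
      simp only [Set.mem_union, Set.mem_setOf_eq]
      constructor
      · rintro (⟨-, -, h⟩ | ⟨hm, -⟩)
        · omega
        · exact hm
      · intro h
        exact Or.inr ⟨h, Or.inr (Nat.zero_le _)⟩
    | succ n ih =>
      intro B hB
      rw [List.range_succ, List.filter_append, List.map_append, listComp_append']
      simp only [Function.comp_apply]
      by_cases hn : n % 2 = 0
      · have hfil : (List.filter (fun j => decide (j % 2 = 0)) [n]) = [n] := by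
          simp [hn]
        rw [hfil]
        have hone : listComp ([n].map gfun) B = gfun n B := rfl
        rw [hone]
        apply ih
        have hgB : gfun n B = listComp ((L n).map atogFun) B := by rw [hgfun]
        rw [hgB]
        have hsem := listAtog_sem rk hmono n (L n) (hL n).1 (fun y hy => ((hL n).2 y).mp hy) B
        ext x
        simp only [Set.mem_union, Set.mem_setOf_eq]
        rw [hsem x]
        have hmemB : ∀ y, y ∈ B.1 ↔
            ((y ∈ A.1 ∧ rk y % 2 = 0 ∧ rk y < n + 1) ∨
             (y ∈ Mset Jpp ∧ (rk y % 2 = 1 ∨ n + 1 ≤ rk y))) := by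
          intro y
          rw [hB, Set.mem_union, Set.mem_setOf_eq, Set.mem_setOf_eq]
        by_cases hx : rk x = n
        · rw [if_pos (((hL n).2 x).mpr hx)]
          have hxev : rk x % 2 = 0 := by omega
          have hgoal : x ∈ Mset Jpp ↔
              ((x ∈ A.1 ∧ rk x % 2 = 0 ∧ rk x < n) ∨
               (x ∈ Mset Jpp ∧ (rk x % 2 = 1 ∨ n ≤ rk x))) := by
            constructor
            · intro h; exact Or.inr ⟨h, Or.inr (by omega)⟩
            · rintro (⟨-, -, h⟩ | ⟨h, -⟩)
              · omega
              · exact h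
          rw [← hgoal]
          have hxBA : x ∈ B.1 ↔ x ∈ A.1 := by
            rw [hmemB x]
            constructor
            · rintro (⟨h, -⟩ | ⟨-, hp⟩)
              · exact h
              · omega
            · intro h; exact Or.inl ⟨h, hxev, by omega⟩
          constructor
          · rintro ⟨hxB, hcond⟩
            refine (hCE x hxev).mpr ⟨fun h => hxB (hxBA.mpr h), ?_, ?_, ?_⟩
            · intro a ha hxa
              have han : rk a ≠ n := by have := hmono x a hxa; omega
              have haB : a ∈ B.1 := (hmemB a).mpr (Or.inr ⟨ha, Or.inr (by
                have := hmono x a hxa; omega)⟩)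
              exact (hcond a haB han).2 hxa.le
            · intro a ha hae hax
              have han : rk a ≠ n := by have := hmono a x hax; omega
              have haB : a ∈ B.1 := (hmemB a).mpr (Or.inl ⟨ha, hae, by
                have := hmono a x hax; omega⟩)
              exact (hcond a haB han).1 hax.le
            · intro m hm hmo hmx
              have hmn : rk m ≠ n := by omega
              have hmB : m ∈ B.1 := (hmemB m).mpr (Or.inr ⟨hm, Or.inl hmo⟩)
              exact (hcond m hmB hmn).1 hmx.le
          · intro hxM
            obtain ⟨hxA, hM, hAe, hMo⟩ := (hCE x hxev).mp hxM
            refine ⟨fun h => hxA (hxBA.mp h), ?_⟩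
            intro a haB han
            have hane : a ≠ x := fun h => han (h ▸ hx)
            constructor
            · intro hax
              have hax' : a < x := lt_of_le_of_ne hax hane
              have harn : rk a < n := by have := hmono a x hax'; omega
              rcases (hmemB a).mp haB with ⟨haA, hae, -⟩ | ⟨hmM, hpar⟩
              · exact hAe a haA hae hax'
              · rcases hpar with ho | hge
                · exact hMo a hmM ho hax'
                · omega
            · intro hxa
              have hxa' : x < a := lt_of_le_of_ne hxa (Ne.symm hane)
              have harn : n < rk a := by have := hmono x a hxa'; omega
              rcases (hmemB a).mp haB with ⟨-, -, hlt⟩ | ⟨hmM, -⟩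
              · omega
              · exact hM a hmM hxa'
        · rw [if_neg (fun hc => hx (((hL n).2 x).mp hc))]
          rw [hmemB x]
          constructor
          · rintro (⟨ha, hae, hlt⟩ | ⟨hm, hp⟩)
            · exact Or.inl ⟨ha, hae, by omega⟩
            · exact Or.inr ⟨hm, by omega⟩
          · rintro (⟨ha, hae, hlt⟩ | ⟨hm, hp⟩)
            · exact Or.inl ⟨ha, hae, by omega⟩
            · exact Or.inr ⟨hm, by omega⟩
      · have hfil : (List.filter (fun j => decide (j % 2 = 0)) [n]) = [] := by
          simp [hn]
        rw [hfil]
        have hone : listComp (([] : List ℕ).map gfun) B = B := rfl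
        rw [hone]
        apply ih
        rw [hB]
        ext x
        simp only [Set.mem_union, Set.mem_setOf_eq]
        constructor
        · rintro (⟨ha, hae, hlt⟩ | ⟨hm, hp⟩)
          · exact Or.inl ⟨ha, hae, by omega⟩
          · exact Or.inr ⟨hm, by omega⟩
        · rintro (⟨ha, hae, hlt⟩ | ⟨hm, hp⟩)
          · exact Or.inl ⟨ha, hae, by omega⟩
          · exact Or.inr ⟨hm, by omega⟩
  -- Assemble
  have hfin : (listComp (((List.range (r + 1)).filter fun j => j % 2 = 0).map gfun)
      (listComp ((((List.range (r + 1)).filter fun j => j % 2 = 1).reverse).map gfun) A)).1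
      = Mset Jpp := by
    apply hP (r + 1)
    rw [hQ (r + 1)]
    ext x
    simp only [Set.mem_union, Set.mem_setOf_eq]
    constructor
    · rintro (⟨ha, hp⟩ | ⟨hm, ho, -⟩)
      · have := hrler x
        exact Or.inl ⟨ha, by omega, by omega⟩
      · exact Or.inr ⟨hm, Or.inl ho⟩
    · rintro (⟨ha, hae, -⟩ | ⟨hm, hp⟩)
      · exact Or.inl ⟨ha, Or.inl hae⟩
      · have := hrler x
        exact Or.inr ⟨hm, by omega, by omega⟩
  apply Subtype.ext
  show {x | ∃ y ∈ _, x ≤ y} = Jpp.1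
  ext x
  rw [Set.mem_setOf_eq]
  constructor
  · rintro ⟨y, hy, hxy⟩
    rw [hfin] at hy
    exact Jpp.2 hxy hy.1
  · intro hx
    obtain ⟨m, hmP, hxm, hmax⟩ := exists_max_above hx
    refine ⟨m, ?_, hxm⟩
    rw [hfin]
    exact ⟨hmP, fun c hc => hmax c hc.lt⟩
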